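/- (Convergence of RSGD-scale) Let R_S : ℝ^d → ℝ be differentiable with β-Lipschitz gradient and bounded below by R_S(x_*). On a probability space with filtration (𝔉_t), let (x_t), (r_t) be adapted sequences of random vectors in ℝ^d with x_0 deterministic, r_0 = 0, and (g_t) random vectors with g_t measurable with respect to 𝔉_{t+1}, E[g_t | 𝔉_t] = ∇R_S(x_t − r_t), and E‖g_t‖² ≤ σ². Suppose the RSGD-scale recursions hold with scaling factor α ∈ (0,1) and fixed learning rate γ > 0 with γ ≤ 1/β: x_{t+1} = x_t − α·(r_t + γ·g_t) and r_{t+1} = (1−α)·(r_t + γ·g_t). Then for all c₁, c₂ > 0 with (1−α)²·(1+c₂) < 1 and all T ≥ 1, min_{0 ≤ t ≤ T−1} E‖∇R_S(x_t)‖² ≤ (1+c₁)·(R_S(x_0) − R_S(x_*))/(γT) + (1+c₁)·β·γ·σ²/2 + ((1−α)²·(1+1/c₂)·(1+1/c₁) / (1 − (1−α)²·(1+c₂)))·β²·γ²·σ². -/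

import Mathlib

open MeasureTheory


open scoped InnerProductSpace

section Descent

variable {E : Type*} [NormedAddCommGroup E] [InnerProductSpace ℝ E] [CompleteSpace E]

lemma descent_lemma (f : E → ℝ) (β : ℝ) (hβ : 0 ≤ β) (hdiff : Differentiable ℝ f)
    (hlip : ∀ x y, ‖gradient f x - gradient f y‖ ≤ β * ‖x - y‖) (a b : E) :
    f b ≤ f a + ⟪gradient f a, b - a⟫_ℝ + β / 2 * ‖b - a‖ ^ 2 := by
  set c : ℝ → E := fun t => a + t • (b - a) with hc
  have hcont : Continuous (gradient f) := by
    have : LipschitzWith β.toNNReal (gradient f) := by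
      apply LipschitzWith.of_dist_le_mul
      intro p q
      rw [dist_eq_norm, dist_eq_norm]
      simpa [Real.coe_toNNReal β hβ] using hlip p q
    exact this.continuous
  have hcderiv : ∀ t : ℝ, HasDerivAt c (b - a) t := by
    intro t
    simpa [hc] using ((hasDerivAt_id t).smul_const (b - a)).const_add a
  have hφ : ∀ t : ℝ, HasDerivAt (fun s => f (c s)) ⟪gradient f (c t), b - a⟫_ℝ t := by
    intro t
    have h1 := (hdiff (c t)).hasGradientAt.hasFDerivAt
    have := h1.comp_hasDerivAt t (hcderiv t)
    simpa [InnerProductSpace.toDual_apply_apply, Function.comp_def] using this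
  have hder_cont : Continuous fun t => ⟪gradient f (c t), b - a⟫_ℝ := by
    exact (hcont.comp (by continuity)).inner continuous_const
  have heq : ∫ t in (0:ℝ)..1, ⟪gradient f (c t), b - a⟫_ℝ = f (c 1) - f (c 0) :=
    intervalIntegral.integral_eq_sub_of_hasDerivAt (fun t _ => hφ t)
      (hder_cont.intervalIntegrable 0 1)
  have hc0 : c 0 = a := by simp [hc]
  have hc1 : c 1 = b := by simp [hc]
  have hmono : ∫ t in (0:ℝ)..1, ⟪gradient f (c t), b - a⟫_ℝ
      ≤ ∫ t in (0:ℝ)..1, (⟪gradient f a, b - a⟫_ℝ + (β * ‖b - a‖ ^ 2) * t) := by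
    apply intervalIntegral.integral_mono_on zero_le_one
      (hder_cont.intervalIntegrable 0 1)
      ((continuous_const.add (continuous_const.mul continuous_id)).intervalIntegrable 0 1)
    intro t ht
    have h2 : ⟪gradient f (c t), b - a⟫_ℝ - ⟪gradient f a, b - a⟫_ℝ
        = ⟪gradient f (c t) - gradient f a, b - a⟫_ℝ := by
      rw [inner_sub_left]
    have h3 : ⟪gradient f (c t) - gradient f a, b - a⟫_ℝ
        ≤ ‖gradient f (c t) - gradient f a‖ * ‖b - a‖ := real_inner_le_norm _ _
    have h4 : ‖gradient f (c t) - gradient f a‖ ≤ β * (t * ‖b - a‖) := by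
      have := hlip (c t) a
      simpa [hc, norm_smul, abs_of_nonneg ht.1] using this
    have h5 : ‖gradient f (c t) - gradient f a‖ * ‖b - a‖ ≤ β * (t * ‖b - a‖) * ‖b - a‖ :=
      mul_le_mul_of_nonneg_right h4 (norm_nonneg _)
    have h6 : β * (t * ‖b - a‖) * ‖b - a‖ = β * ‖b - a‖ ^ 2 * t := by ring
    simp only [Pi.add_apply, Pi.mul_apply, id_eq]
    linarith
  have hval : ∫ t in (0:ℝ)..1, (⟪gradient f a, b - a⟫_ℝ + (β * ‖b - a‖ ^ 2) * t)
      = ⟪gradient f a, b - a⟫_ℝ + β / 2 * ‖b - a‖ ^ 2 := by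
    rw [intervalIntegral.integral_add intervalIntegrable_const
      ((intervalIntegral.intervalIntegrable_id).const_mul _),
      intervalIntegral.integral_const_mul, integral_id]
    simp; ring
  rw [heq, hc0, hc1] at hmono
  rw [hval] at hmono
  linarith

end Descent

lemma young_sq (c x y : ℝ) (hc : 0 < c) (hx : 0 ≤ x) (hy : 0 ≤ y) :
    (x + y) ^ 2 ≤ (1 + c) * x ^ 2 + (1 + 1 / c) * y ^ 2 := by
  have key : (1 + c) * x ^ 2 + (1 + 1/c) * y ^ 2 - (x + y) ^ 2 = (c * x - y)^2 / c := by
    field_simp; ring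
  linarith [key, div_nonneg (sq_nonneg (c * x - y)) hc.le]

lemma young_norm_sq {E : Type*} [NormedAddCommGroup E] (c : ℝ) (hc : 0 < c) (a b : E) :
    ‖a + b‖ ^ 2 ≤ (1 + c) * ‖a‖ ^ 2 + (1 + 1 / c) * ‖b‖ ^ 2 := by
  calc ‖a + b‖ ^ 2 ≤ (‖a‖ + ‖b‖) ^ 2 := by
        have := norm_add_le a b
        nlinarith [norm_nonneg (a + b), norm_nonneg a, norm_nonneg b]
    _ ≤ _ := young_sq c _ _ hc (norm_nonneg a) (norm_nonneg b)

lemma condexp_clm {Ω : Type*} {m m0 : MeasurableSpace Ω} {μ : Measure Ω} [IsFiniteMeasure μ]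
    (hm : m ≤ m0) {E F : Type*} [NormedAddCommGroup E] [NormedSpace ℝ E] [CompleteSpace E]
    [NormedAddCommGroup F] [NormedSpace ℝ F] [CompleteSpace F]
    (L : E →L[ℝ] F) {f : Ω → E} (hf : Integrable f μ) :
    (μ[fun ω => L (f ω) | m]) =ᵐ[μ] fun ω => L ((μ[f|m]) ω) := by
  refine (ae_eq_condExp_of_forall_setIntegral_eq hm (L.integrable_comp hf)
    (fun s _ _ => (L.integrable_comp integrable_condExp).integrableOn)
    (fun s hs hμs => ?_) ?_).symm
  · rw [ContinuousLinearMap.integral_comp_comm L integrable_condExp.integrableOn,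
      ContinuousLinearMap.integral_comp_comm L hf.integrableOn,
      setIntegral_condExp hm hf hs]
  · exact StronglyMeasurable.aestronglyMeasurable
      (L.continuous.comp_stronglyMeasurable stronglyMeasurable_condExp)

lemma coord_abs_le_norm {d : ℕ} (x : EuclideanSpace ℝ (Fin d)) (i : Fin d) : |x i| ≤ ‖x‖ := by
  rw [EuclideanSpace.norm_eq, ← Real.sqrt_sq_eq_abs]
  apply Real.sqrt_le_sqrt
  have := Finset.single_le_sum (f := fun j => ‖x j‖ ^ 2)
    (fun j _ => sq_nonneg _) (Finset.mem_univ i)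
  simpa [Real.norm_eq_abs, sq_abs] using this


lemma integral_inner_eq_sq {Ω : Type*} {m m0 : MeasurableSpace Ω} (hm : m ≤ m0) {μ : Measure Ω}
    [IsProbabilityMeasure μ] {d : ℕ} {h g : Ω → EuclideanSpace ℝ (Fin d)}
    (hh : StronglyMeasurable[m] h) (hh2 : MemLp h 2 μ)
    (hg1 : Integrable g μ) (hg2 : MemLp g 2 μ)
    (hcond : (μ[g|m]) =ᵐ[μ] h) :
    ∫ ω, ⟪h ω, g ω⟫_ℝ ∂μ = ∫ ω, ‖h ω‖ ^ 2 ∂μ := by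
  have hhm0 : AEStronglyMeasurable h μ := (hh.mono hm).aestronglyMeasurable
  have hsqint : ∀ {f : Ω → EuclideanSpace ℝ (Fin d)}, MemLp f 2 μ →
      Integrable (fun ω => ‖f ω‖ ^ 2) μ := fun hf =>
    (memLp_two_iff_integrable_sq_norm hf.1).mp hf
  -- integrability of coordinate products
  have hprod : ∀ (u v : Ω → EuclideanSpace ℝ (Fin d)), MemLp u 2 μ → MemLp v 2 μ →
      ∀ i : Fin d, Integrable (fun ω => u ω i * v ω i) μ := by
    intro u v hu hv i
    refine Integrable.mono' (g := fun ω => (‖u ω‖ ^ 2 + ‖v ω‖ ^ 2) / 2)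
      (((hsqint hu).add (hsqint hv)).div_const 2)
      ?_ (Filter.Eventually.of_forall fun ω => ?_)
    · exact ((EuclideanSpace.proj i).continuous.comp_aestronglyMeasurable hu.1).mul
        ((EuclideanSpace.proj i).continuous.comp_aestronglyMeasurable hv.1)
    · have h1 := coord_abs_le_norm (u ω) i
      have h2 := coord_abs_le_norm (v ω) i
      have : |u ω i * v ω i| ≤ ‖u ω‖ * ‖v ω‖ := by
        rw [abs_mul]
        exact mul_le_mul h1 h2 (abs_nonneg _) (norm_nonneg _)
      rw [Real.norm_eq_abs]
      nlinarith [sq_nonneg (‖u ω‖ - ‖v ω‖), abs_nonneg (u ω i * v ω i)]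
  have key : ∀ i : Fin d, ∫ ω, h ω i * g ω i ∂μ = ∫ ω, h ω i * h ω i ∂μ := by
    intro i
    have hhi : StronglyMeasurable[m] fun ω => h ω i :=
      (EuclideanSpace.proj i).continuous.comp_stronglyMeasurable hh
    have hgi : Integrable (fun ω => g ω i) μ := by
      simpa using (EuclideanSpace.proj (𝕜 := ℝ) i).integrable_comp hg1
    have hmul := condExp_mul_of_stronglyMeasurable_left (μ := μ) hhi
      (f := fun ω => h ω i) (g := fun ω => g ω i) (hprod h g hh2 hg2 i) hgi
    have hgi_cond : (μ[fun ω => g ω i|m]) =ᵐ[μ] fun ω => h ω i := by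
      have h1 := condexp_clm hm (EuclideanSpace.proj (𝕜 := ℝ) i) hg1
      refine h1.trans ?_
      filter_upwards [hcond] with ω hω
      simp [hω]
    calc ∫ ω, h ω i * g ω i ∂μ
        = ∫ ω, (μ[(fun ω => h ω i) * fun ω => g ω i|m]) ω ∂μ :=
          (integral_condExp hm).symm
      _ = ∫ ω, ((fun ω => h ω i) * μ[fun ω => g ω i|m]) ω ∂μ := integral_congr_ae hmul
      _ = ∫ ω, h ω i * h ω i ∂μ := by
          refine integral_congr_ae ?_
          filter_upwards [hgi_cond] with ω hω
          simp [hω]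
  have hnorm_eq : ∀ (v : EuclideanSpace ℝ (Fin d)), ⟪v, v⟫_ℝ = ‖v‖ ^ 2 :=
    fun v => real_inner_self_eq_norm_sq v
  calc ∫ ω, ⟪h ω, g ω⟫_ℝ ∂μ = ∫ ω, ∑ i, h ω i * g ω i ∂μ := by
        refine integral_congr_ae (Filter.Eventually.of_forall fun ω => ?_)
        simp [PiLp.inner_apply, RCLike.inner_apply, starRingEnd_apply, mul_comm]
    _ = ∑ i, ∫ ω, h ω i * g ω i ∂μ :=
        integral_finset_sum _ (fun i _ => hprod h g hh2 hg2 i)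
    _ = ∑ i, ∫ ω, h ω i * h ω i ∂μ := by simp_rw [key]
    _ = ∫ ω, ∑ i, h ω i * h ω i ∂μ :=
        (integral_finset_sum _ (fun i _ => hprod h h hh2 hh2 i)).symm
    _ = ∫ ω, ⟪h ω, h ω⟫_ℝ ∂μ := by
        refine integral_congr_ae (Filter.Eventually.of_forall fun ω => ?_)
        simp only [PiLp.inner_apply, RCLike.inner_apply, starRingEnd_apply, star_trivial]
    _ = ∫ ω, ‖h ω‖ ^ 2 ∂μ :=
        integral_congr_ae (Filter.Eventually.of_forall fun ω => real_inner_self_eq_norm_sq _)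

set_option maxHeartbeats 1000000 in
/-- Convergence of RSGD-scale: for β-smooth `R_S` bounded below by `R_S x_*`,
RSGD with the scaling residual scheme `x (t+1) = x t - α • (r t + γ • g t)`,
`r (t+1) = (1-α) • (r t + γ • g t)`, `r 0 = 0`, `α ∈ (0,1)`, `0 < γ ≤ 1/β`, with unbiased
stochastic gradients at the reference points `x t - r t` of second moment ≤ σ², for all
`c₁, c₂ > 0` with `(1-α)²(1+c₂) < 1` and `T ≥ 1`:
`min_{0 ≤ t < T} E‖∇R_S(x t)‖² ≤ (1+c₁)(R_S(x0) - R_S(x_*))/(γT) + (1+c₁)βγσ²/2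
  + ((1-α)²(1+1/c₂)(1+1/c₁)/(1 - (1-α)²(1+c₂))) β² γ² σ²`. -/
theorem rsgd_scale_convergence
    {d : ℕ} (RS : EuclideanSpace ℝ (Fin d) → ℝ) (β σ γ α : ℝ)
    (xstar x0 : EuclideanSpace ℝ (Fin d))
    (hβ : 0 < β) (hα0 : 0 < α) (hα1 : α < 1)
    (hdiff : Differentiable ℝ RS)
    (hsmooth : ∀ x y, ‖gradient RS x - gradient RS y‖ ≤ β * ‖x - y‖)
    (hlb : ∀ x, RS xstar ≤ RS x)
    {Ω : Type*} {m0 : MeasurableSpace Ω} {μ : Measure Ω} [IsProbabilityMeasure μ]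
    (ℱ : Filtration ℕ m0)
    (x r g : ℕ → Ω → EuclideanSpace ℝ (Fin d))
    (hxadapted : Adapted ℱ x) (hradapted : Adapted ℱ r)
    (hx0 : ∀ ω, x 0 ω = x0) (hr0 : ∀ ω, r 0 ω = 0)
    (hgmeas : ∀ t, StronglyMeasurable[ℱ (t + 1)] (g t))
    (hgint : ∀ t, Integrable (g t) μ)
    (hgsqint : ∀ t, Integrable (fun ω => ‖g t ω‖ ^ 2) μ)
    (hunbiased : ∀ t, μ[g t | ℱ t] =ᵐ[μ] fun ω => gradient RS (x t ω - r t ω))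
    (hsecond : ∀ t, ∫ ω, ‖g t ω‖ ^ 2 ∂μ ≤ σ ^ 2)
    (hxrec : ∀ t ω, x (t + 1) ω = x t ω - α • (r t ω + γ • g t ω))
    (hrrec : ∀ t ω, r (t + 1) ω = (1 - α) • (r t ω + γ • g t ω))
    (hγ0 : 0 < γ) (hγβ : γ ≤ 1 / β)
    (c₁ c₂ : ℝ) (hc₁ : 0 < c₁) (hc₂ : 0 < c₂) (hc₂' : (1 - α) ^ 2 * (1 + c₂) < 1)
    (T : ℕ) (hT : 1 ≤ T) :
    (Finset.range T).inf' (Finset.nonempty_range_iff.mpr (by omega))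
        (fun t => ∫ ω, ‖gradient RS (x t ω)‖ ^ 2 ∂μ)
      ≤ (1 + c₁) * (RS x0 - RS xstar) / (γ * T) + (1 + c₁) * β * γ * σ ^ 2 / 2
        + ((1 - α) ^ 2 * (1 + 1 / c₂) * (1 + 1 / c₁) / (1 - (1 - α) ^ 2 * (1 + c₂)))
          * β ^ 2 * γ ^ 2 * σ ^ 2 := by
  classical
  have hσ2 : (0:ℝ) ≤ σ ^ 2 := sq_nonneg σ
  set q : ℝ := (1 - α) ^ 2 * (1 + c₂) with hqdef
  set b : ℝ := (1 - α) ^ 2 * (1 + 1 / c₂) * γ ^ 2 * σ ^ 2 with hbdef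
  have hq0 : 0 ≤ q := by positivity
  have hq1 : q < 1 := hc₂'
  have h1q : (0:ℝ) < 1 - q := by linarith
  have hb0 : 0 ≤ b := by positivity
  -- reference sequence
  set y : ℕ → Ω → EuclideanSpace ℝ (Fin d) := fun t ω => x t ω - r t ω with hydef
  have hyrec : ∀ t ω, y (t + 1) ω = y t ω - γ • g t ω := by
    intro t ω
    show x (t+1) ω - r (t+1) ω = (x t ω - r t ω) - γ • g t ω
    rw [hxrec, hrrec]
    module
  have hy0 : ∀ ω, y 0 ω = x0 := by
    intro ω; show x 0 ω - r 0 ω = x0; rw [hx0, hr0, sub_zero]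
  have hymeas : ∀ t, StronglyMeasurable[ℱ t] (y t) := fun t => ((hxadapted t).sub (hradapted t)).stronglyMeasurable
  have hgradcont : Continuous (gradient RS) := by
    have : LipschitzWith β.toNNReal (gradient RS) := by
      apply LipschitzWith.of_dist_le_mul
      intro p q'
      rw [dist_eq_norm, dist_eq_norm]
      simpa [Real.coe_toNNReal β hβ.le] using hsmooth p q'
    exact this.continuous
  -- L² facts
  have hsq : ∀ {f : Ω → EuclideanSpace ℝ (Fin d)}, MemLp f 2 μ →
      Integrable (fun ω => ‖f ω‖ ^ 2) μ := fun hf =>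
    (memLp_two_iff_integrable_sq_norm hf.1).mp hf
  have hgL2 : ∀ t, MemLp (g t) 2 μ := fun t =>
    (memLp_two_iff_integrable_sq_norm (hgint t).1).mpr (hgsqint t)
  have hrL2 : ∀ t, MemLp (r t) 2 μ := by
    intro t
    induction t with
    | zero =>
      have h0 : r 0 = fun _ => (0 : EuclideanSpace ℝ (Fin d)) := funext hr0
      rw [h0]; exact memLp_const 0
    | succ t ih =>
      have h0 : r (t + 1) = fun ω => (1 - α) • (r t ω + γ • g t ω) := funext (hrrec t)
      rw [h0]
      exact (ih.add ((hgL2 t).const_smul γ)).const_smul (1 - α)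
  have hxL2 : ∀ t, MemLp (x t) 2 μ := by
    intro t
    induction t with
    | zero =>
      have h0 : x 0 = fun _ => x0 := funext hx0
      rw [h0]; exact memLp_const x0
    | succ t ih =>
      have h0 : x (t + 1) = fun ω => x t ω - α • (r t ω + γ • g t ω) := funext (hxrec t)
      rw [h0]
      exact ih.sub (((hrL2 t).add ((hgL2 t).const_smul γ)).const_smul α)
  have hyL2 : ∀ t, MemLp (y t) 2 μ := fun t => (hxL2 t).sub (hrL2 t)
  have hgradL2 : ∀ {f : Ω → EuclideanSpace ℝ (Fin d)}, MemLp f 2 μ →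
      MemLp (fun ω => gradient RS (f ω)) 2 μ := by
    intro f hf
    have hmeas : AEStronglyMeasurable (fun ω => gradient RS (f ω)) μ :=
      hgradcont.comp_aestronglyMeasurable hf.1
    have hbnd : MemLp (fun ω => ‖gradient RS x0‖ + β * ‖f ω - x0‖) 2 μ :=
      by
        have hA : MemLp (fun _ : Ω => ‖gradient RS x0‖) 2 μ := memLp_const _
        have hB : MemLp (fun ω => β * ‖f ω - x0‖) 2 μ :=
          (hf.sub (memLp_const x0)).norm.const_mul β
        exact hA.add hB
    refine hbnd.of_le hmeas (Filter.Eventually.of_forall fun ω => ?_)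
    have h2 := hsmooth (f ω) x0
    have h3 := norm_sub_norm_le (gradient RS (f ω)) (gradient RS x0)
    have h1 : ‖gradient RS (f ω)‖ ≤ ‖gradient RS x0‖ + β * ‖f ω - x0‖ := by linarith
    rw [Real.norm_eq_abs]
    exact h1.trans (le_abs_self _)
  have hRSint : ∀ {f : Ω → EuclideanSpace ℝ (Fin d)}, MemLp f 2 μ →
      Integrable (fun ω => RS (f ω)) μ := by
    intro f hf
    have hmeas : AEStronglyMeasurable (fun ω => RS (f ω)) μ :=
      hdiff.continuous.comp_aestronglyMeasurable hf.1
    have hB : Integrable (fun ω => |RS xstar| + (RS x0 - RS xstar)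
        + ‖gradient RS x0‖ * ‖f ω - x0‖ + β / 2 * ‖f ω - x0‖ ^ 2) μ := by
      apply Integrable.add
      apply Integrable.add
      · exact integrable_const _
      · exact ((hf.sub (memLp_const x0)).norm.integrable (by norm_num)).const_mul _
      · exact (hsq (hf.sub (memLp_const x0))).const_mul _
    refine hB.mono' hmeas (Filter.Eventually.of_forall fun ω => ?_)
    have hup := descent_lemma RS β hβ.le hdiff hsmooth x0 (f ω)
    have hlow := hlb (f ω)
    have hlow0 := hlb x0
    have hinner : ⟪gradient RS x0, f ω - x0⟫_ℝ ≤ ‖gradient RS x0‖ * ‖f ω - x0‖ :=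
      real_inner_le_norm _ _
    have p1 : 0 ≤ ‖gradient RS x0‖ * ‖f ω - x0‖ :=
      mul_nonneg (norm_nonneg _) (norm_nonneg _)
    have p2 : 0 ≤ β / 2 * ‖f ω - x0‖ ^ 2 := by positivity
    rw [Real.norm_eq_abs, abs_le]
    constructor
    · have := neg_abs_le (RS xstar)
      linarith
    · have := le_abs_self (RS xstar)
      linarith
  have hinnerint : ∀ t, Integrable (fun ω => ⟪gradient RS (y t ω), g t ω⟫_ℝ) μ := by
    intro t
    refine Integrable.mono' (g := fun ω => (‖gradient RS (y t ω)‖ ^ 2 + ‖g t ω‖ ^ 2) / 2)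
      (((hsq (hgradL2 (hyL2 t))).add (hgsqint t)).div_const 2)
      ((hgradcont.comp_aestronglyMeasurable (hyL2 t).1).inner (hgint t).1)
      (Filter.Eventually.of_forall fun ω => ?_)
    rw [Real.norm_eq_abs]
    have h1 := abs_real_inner_le_norm (gradient RS (y t ω)) (g t ω)
    nlinarith [sq_nonneg (‖gradient RS (y t ω)‖ - ‖g t ω‖)]
  -- one-step descent in expectation
  have hstep : ∀ t, ∫ ω, RS (y (t + 1) ω) ∂μ
      ≤ ∫ ω, RS (y t ω) ∂μ - γ * ∫ ω, ‖gradient RS (y t ω)‖ ^ 2 ∂μ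
        + β * γ ^ 2 / 2 * σ ^ 2 := by
    intro t
    have hptwise : ∀ ω, RS (y (t + 1) ω) ≤ RS (y t ω)
        - γ * ⟪gradient RS (y t ω), g t ω⟫_ℝ + β / 2 * γ ^ 2 * ‖g t ω‖ ^ 2 := by
      intro ω
      have hd := descent_lemma RS β hβ.le hdiff hsmooth (y t ω) (y (t + 1) ω)
      have hdiffpt : y (t + 1) ω - y t ω = -(γ • g t ω) := by
        rw [hyrec]; abel
      rw [hdiffpt] at hd
      have h1 : ⟪gradient RS (y t ω), -(γ • g t ω)⟫_ℝ
          = -(γ * ⟪gradient RS (y t ω), g t ω⟫_ℝ) := by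
        rw [inner_neg_right, real_inner_smul_right]
      have h2 : ‖-(γ • g t ω)‖ ^ 2 = γ ^ 2 * ‖g t ω‖ ^ 2 := by
        rw [norm_neg, norm_smul, Real.norm_eq_abs, mul_pow, sq_abs]
      rw [h1, h2] at hd
      linarith
    have hint1 : ∫ ω, RS (y (t + 1) ω) ∂μ
        ≤ ∫ ω, (RS (y t ω) - γ * ⟪gradient RS (y t ω), g t ω⟫_ℝ
            + β / 2 * γ ^ 2 * ‖g t ω‖ ^ 2) ∂μ :=
      integral_mono (hRSint (hyL2 (t + 1)))
        (((hRSint (hyL2 t)).sub ((hinnerint t).const_mul γ)).add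
          ((hgsqint t).const_mul (β / 2 * γ ^ 2))) hptwise
    have hA : Integrable (fun ω => RS (y t ω) - γ * ⟪gradient RS (y t ω), g t ω⟫_ℝ) μ :=
      (hRSint (hyL2 t)).sub ((hinnerint t).const_mul γ)
    have hB : Integrable (fun ω => β / 2 * γ ^ 2 * ‖g t ω‖ ^ 2) μ :=
      (hgsqint t).const_mul _
    have hA1 : Integrable (fun ω => γ * ⟪gradient RS (y t ω), g t ω⟫_ℝ) μ :=
      (hinnerint t).const_mul γ
    rw [integral_add hA hB, integral_sub (hRSint (hyL2 t)) hA1,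
      integral_const_mul, integral_const_mul] at hint1
    have hI : ∫ ω, ⟪gradient RS (y t ω), g t ω⟫_ℝ ∂μ
        = ∫ ω, ‖gradient RS (y t ω)‖ ^ 2 ∂μ := by
      refine integral_inner_eq_sq (ℱ.le t)
        (hgradcont.comp_stronglyMeasurable (hymeas t)) (hgradL2 (hyL2 t))
        (hgint t) (hgL2 t) (hunbiased t)
    rw [hI] at hint1
    have hN := hsecond t
    have hc : 0 ≤ β / 2 * γ ^ 2 := by positivity
    nlinarith [mul_le_mul_of_nonneg_left hN hc]
  -- telescoping
  have htel : ∀ n : ℕ, ∫ ω, RS (y n ω) ∂μ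
      + γ * ∑ t ∈ Finset.range n, ∫ ω, ‖gradient RS (y t ω)‖ ^ 2 ∂μ
      ≤ RS x0 + n * (β * γ ^ 2 / 2 * σ ^ 2) := by
    intro n
    induction n with
    | zero =>
      have h0 : (fun ω => RS (y 0 ω)) = fun _ => RS x0 := funext fun ω => by rw [hy0]
      simp [h0]
    | succ n ih =>
      have h1 := hstep n
      rw [Finset.sum_range_succ]
      have h2 : γ * (∑ t ∈ Finset.range n, ∫ ω, ‖gradient RS (y t ω)‖ ^ 2 ∂μ
          + ∫ ω, ‖gradient RS (y n ω)‖ ^ 2 ∂μ)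
          = γ * ∑ t ∈ Finset.range n, ∫ ω, ‖gradient RS (y t ω)‖ ^ 2 ∂μ
            + γ * ∫ ω, ‖gradient RS (y n ω)‖ ^ 2 ∂μ := mul_add γ _ _
      push_cast
      linarith
  have hAT : RS xstar ≤ ∫ ω, RS (y T ω) ∂μ := by
    have h1 : RS xstar = ∫ (_ : Ω), RS xstar ∂μ := by simp
    rw [h1]
    exact integral_mono (integrable_const _) (hRSint (hyL2 T))
      (fun ω => hlb (y T ω))
  -- residual second moment bound
  have hRq : ∀ t, ∫ ω, ‖r t ω‖ ^ 2 ∂μ ≤ b / (1 - q) := by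
    intro t
    induction t with
    | zero =>
      have h0 : (fun ω => ‖r 0 ω‖ ^ 2) = fun _ => (0:ℝ) := funext fun ω => by
        rw [hr0]; simp
      rw [h0]
      simp only [integral_zero]
      positivity
    | succ t ih =>
      have hC : 0 ≤ (1 - α) ^ 2 * (1 + 1 / c₂) * γ ^ 2 := by positivity
      have hpt : ∀ ω, ‖r (t + 1) ω‖ ^ 2
          ≤ q * ‖r t ω‖ ^ 2 + ((1 - α) ^ 2 * (1 + 1 / c₂) * γ ^ 2) * ‖g t ω‖ ^ 2 := by
        intro ω
        rw [hrrec]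
        have h1 : ‖(1 - α) • (r t ω + γ • g t ω)‖ ^ 2
            = (1 - α) ^ 2 * ‖r t ω + γ • g t ω‖ ^ 2 := by
          rw [norm_smul, Real.norm_eq_abs, mul_pow, sq_abs]
        rw [h1]
        have h2 := young_norm_sq c₂ hc₂ (r t ω) (γ • g t ω)
        have h3 : ‖γ • g t ω‖ ^ 2 = γ ^ 2 * ‖g t ω‖ ^ 2 := by
          rw [norm_smul, Real.norm_eq_abs, mul_pow, sq_abs]
        rw [h3] at h2
        have h4 : (0:ℝ) ≤ (1 - α) ^ 2 := sq_nonneg _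
        have h5 := mul_le_mul_of_nonneg_left h2 h4
        rw [hqdef]
        nlinarith [h5]
      have hint1 : ∫ ω, ‖r (t + 1) ω‖ ^ 2 ∂μ
          ≤ ∫ ω, (q * ‖r t ω‖ ^ 2
            + ((1 - α) ^ 2 * (1 + 1 / c₂) * γ ^ 2) * ‖g t ω‖ ^ 2) ∂μ :=
        integral_mono (hsq (hrL2 (t + 1)))
          (((hsq (hrL2 t)).const_mul q).add
            ((hgsqint t).const_mul ((1 - α) ^ 2 * (1 + 1 / c₂) * γ ^ 2))) hpt
      have hA : Integrable (fun ω => q * ‖r t ω‖ ^ 2) μ := (hsq (hrL2 t)).const_mul q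
      have hB : Integrable (fun ω => ((1 - α) ^ 2 * (1 + 1 / c₂) * γ ^ 2) * ‖g t ω‖ ^ 2) μ :=
        (hgsqint t).const_mul _
      rw [integral_add hA hB, integral_const_mul, integral_const_mul] at hint1
      have h6 : q * ∫ ω, ‖r t ω‖ ^ 2 ∂μ ≤ q * (b / (1 - q)) :=
        mul_le_mul_of_nonneg_left ih hq0
      have h7 : ((1 - α) ^ 2 * (1 + 1 / c₂) * γ ^ 2) * ∫ ω, ‖g t ω‖ ^ 2 ∂μ
          ≤ ((1 - α) ^ 2 * (1 + 1 / c₂) * γ ^ 2) * σ ^ 2 :=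
        mul_le_mul_of_nonneg_left (hsecond t) hC
      have h8 : q * (b / (1 - q)) + ((1 - α) ^ 2 * (1 + 1 / c₂) * γ ^ 2) * σ ^ 2
          = b / (1 - q) := by
        have hne : 1 - q ≠ 0 := ne_of_gt h1q
        rw [hbdef]
        field_simp
        ring
      linarith
  -- comparison of gradients at x and y
  have hG : ∀ t, ∫ ω, ‖gradient RS (x t ω)‖ ^ 2 ∂μ
      ≤ (1 + c₁) * ∫ ω, ‖gradient RS (y t ω)‖ ^ 2 ∂μ
        + ((1 + 1 / c₁) * β ^ 2) * (b / (1 - q)) := by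
    intro t
    have hpt : ∀ ω, ‖gradient RS (x t ω)‖ ^ 2
        ≤ (1 + c₁) * ‖gradient RS (y t ω)‖ ^ 2
          + ((1 + 1 / c₁) * β ^ 2) * ‖r t ω‖ ^ 2 := by
      intro ω
      have h2 := young_norm_sq c₁ hc₁ (gradient RS (y t ω))
        (gradient RS (x t ω) - gradient RS (y t ω))
      have hxy : gradient RS (y t ω) + (gradient RS (x t ω) - gradient RS (y t ω))
          = gradient RS (x t ω) := by abel
      rw [hxy] at h2
      have h3 := hsmooth (x t ω) (y t ω)
      have h4 : x t ω - y t ω = r t ω := by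
        show x t ω - (x t ω - r t ω) = r t ω; abel
      rw [h4] at h3
      have h5 : ‖gradient RS (x t ω) - gradient RS (y t ω)‖ ^ 2 ≤ β ^ 2 * ‖r t ω‖ ^ 2 := by
        nlinarith [norm_nonneg (gradient RS (x t ω) - gradient RS (y t ω)),
          norm_nonneg (r t ω)]
      have h6 : (0:ℝ) ≤ 1 + 1 / c₁ := by positivity
      nlinarith [mul_le_mul_of_nonneg_left h5 h6]
    have hint1 : ∫ ω, ‖gradient RS (x t ω)‖ ^ 2 ∂μ
        ≤ ∫ ω, ((1 + c₁) * ‖gradient RS (y t ω)‖ ^ 2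
          + ((1 + 1 / c₁) * β ^ 2) * ‖r t ω‖ ^ 2) ∂μ :=
      integral_mono (hsq (hgradL2 (hxL2 t)))
        (((hsq (hgradL2 (hyL2 t))).const_mul (1 + c₁)).add
          ((hsq (hrL2 t)).const_mul ((1 + 1 / c₁) * β ^ 2))) hpt
    have hA : Integrable (fun ω => (1 + c₁) * ‖gradient RS (y t ω)‖ ^ 2) μ :=
      (hsq (hgradL2 (hyL2 t))).const_mul _
    have hB : Integrable (fun ω => ((1 + 1 / c₁) * β ^ 2) * ‖r t ω‖ ^ 2) μ :=
      (hsq (hrL2 t)).const_mul _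
    rw [integral_add hA hB, integral_const_mul, integral_const_mul] at hint1
    have h7 : ((1 + 1 / c₁) * β ^ 2) * ∫ ω, ‖r t ω‖ ^ 2 ∂μ
        ≤ ((1 + 1 / c₁) * β ^ 2) * (b / (1 - q)) :=
      mul_le_mul_of_nonneg_left (hRq t) (by positivity)
    linarith
  -- assembling
  set S : ℝ := ∑ t ∈ Finset.range T, ∫ ω, ‖gradient RS (y t ω)‖ ^ 2 ∂μ with hSdef
  have hSsum : γ * S ≤ (RS x0 - RS xstar) + T * (β * γ ^ 2 / 2 * σ ^ 2) := by
    have := htel T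
    linarith
  have hT0 : (0:ℝ) < T := by exact_mod_cast Nat.pos_of_ne_zero (by omega)
  set RHS : ℝ := (1 + c₁) * (RS x0 - RS xstar) / (γ * T) + (1 + c₁) * β * γ * σ ^ 2 / 2
        + ((1 - α) ^ 2 * (1 + 1 / c₂) * (1 + 1 / c₁) / (1 - q))
          * β ^ 2 * γ ^ 2 * σ ^ 2 with hRHSdef
  have hSle : S ≤ (RS x0 - RS xstar) / γ + T * (β * γ * σ ^ 2 / 2) := by
    have h1 : γ * ((RS x0 - RS xstar) / γ + T * (β * γ * σ ^ 2 / 2))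
        = (RS x0 - RS xstar) + T * (β * γ ^ 2 / 2 * σ ^ 2) := by
      field_simp
    nlinarith [hSsum]
  have hsum_le : ∑ t ∈ Finset.range T, ∫ ω, ‖gradient RS (x t ω)‖ ^ 2 ∂μ
      ≤ ∑ _t ∈ Finset.range T, RHS := by
    have h1 : ∑ t ∈ Finset.range T, ∫ ω, ‖gradient RS (x t ω)‖ ^ 2 ∂μ
        ≤ ∑ t ∈ Finset.range T, ((1 + c₁) * ∫ ω, ‖gradient RS (y t ω)‖ ^ 2 ∂μ
          + ((1 + 1 / c₁) * β ^ 2) * (b / (1 - q))) :=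
      Finset.sum_le_sum fun t _ => hG t
    have h2 : ∑ t ∈ Finset.range T, ((1 + c₁) * ∫ ω, ‖gradient RS (y t ω)‖ ^ 2 ∂μ
          + ((1 + 1 / c₁) * β ^ 2) * (b / (1 - q)))
        = (1 + c₁) * S + T * (((1 + 1 / c₁) * β ^ 2) * (b / (1 - q))) := by
      rw [Finset.sum_add_distrib, ← Finset.mul_sum, Finset.sum_const,
        Finset.card_range, nsmul_eq_mul]
    have h3 : ∑ _t ∈ Finset.range T, RHS = T * RHS := by
      rw [Finset.sum_const, Finset.card_range, nsmul_eq_mul]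
    rw [h3]
    have h4 : (1 + c₁) * S ≤ (1 + c₁) * ((RS x0 - RS xstar) / γ + T * (β * γ * σ ^ 2 / 2)) :=
      mul_le_mul_of_nonneg_left hSle (by positivity)
    have h5 : (T:ℝ) * RHS = (1 + c₁) * ((RS x0 - RS xstar) / γ + T * (β * γ * σ ^ 2 / 2))
        + T * (((1 + 1 / c₁) * β ^ 2) * (b / (1 - q))) := by
      rw [hRHSdef, hbdef]
      have hTne : (T:ℝ) ≠ 0 := ne_of_gt hT0
      have hγne : γ ≠ 0 := ne_of_gt hγ0
      have hqne : 1 - q ≠ 0 := ne_of_gt h1q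
      field_simp
    rw [h5]
    linarith
  obtain ⟨t0, ht0m, hle⟩ := Finset.exists_le_of_sum_le
    (Finset.nonempty_range_iff.mpr (by omega)) hsum_le
  exact le_trans (Finset.inf'_le _ ht0m) hle
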